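/- The left creation operator bound: for a twist T and ξ ∈ H, the creation operator a*_{L,T}(ξ), defined on the n-particle space by [Ψ_n] ↦ [ξ ⊗ Ψ_n] with respect to the twisted inner product ⟨·, P_{T,n}·⟩, satisfies ‖a*_{L,T}(ξ)|_{H_{T,n}}‖_T ≤ √(c_{T,n}) ‖ξ‖, where c_{T,n} = Σ_{k=0}^n ‖T‖^k. In particular, if ‖T‖ < 1 then ‖a*_{L,T}(ξ)‖_T ≤ ‖ξ‖/√(1−‖T‖). -/

import Mathlib

/-!
STATEMENT 3: The left creation operator bound
`‖a*_{L,T}(ξ)|_{H_{T,n}}‖_T ≤ √(c_{T,n}) ‖ξ‖`, `c_{T,n} = Σ_{k=0}^n ‖T‖^k`;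
in particular `‖a*_{L,T}(ξ)‖_T ≤ ‖ξ‖/√(1-‖T‖)` when `‖T‖ < 1`.

Setting: `V n` plays the role of `H^{⊗n}` (with `H = V 1` the one-particle
space), `Tk n k` the amplification `T_k` of the twist `T = Tk 2 1`, `ampL n`
the amplification `X ↦ 1 ⊗ X`, `tens n ξ Ψ` the simple tensor `ξ ⊗ Ψ`.
Since the twisted norm is `‖Ψ‖_T² = ⟨Ψ, P_{T,n} Ψ⟩`, the creation operator
bound is expressed in the equivalent squared form
`⟨ξ⊗Ψ, P_{T,n+1}(ξ⊗Ψ)⟩ ≤ c_{T,n} ‖ξ‖² ⟨Ψ, P_{T,n} Ψ⟩`.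
-/

noncomputable section
open scoped ComplexOrder
open ContinuousLinearMap

set_option synthInstance.maxHeartbeats 1000000
set_option maxHeartbeats 1600000

private lemma aux_ratio_step {x y : ℝ} (hx : 0 ≤ x) (hy : 0 ≤ y) (h : x ^ 2 ≤ y * x) :
    x ≤ y := by
  rcases hx.eq_or_lt with h0 | h0
  · rw [← h0]; exact hy
  · nlinarith

private lemma logconvex_bound (u : ℕ → ℝ) (hu : ∀ k, 0 ≤ u k)
    (hlc : ∀ k, u (k + 1) ^ 2 ≤ u k * u (k + 2))
    {K c : ℝ} (hc : 0 < c) (hub : ∀ k, u k ≤ K * c ^ k) : u 1 ≤ c * u 0 := by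
  by_contra hcon
  push_neg at hcon
  have hu1 : 0 < u 1 := lt_of_le_of_lt (mul_nonneg hc.le (hu 0)) hcon
  have hstep : ∀ k, u 1 * u k ≤ u 0 * u (k + 1) := by
    intro k
    induction k with
    | zero => rw [mul_comm]
    | succ k ih =>
      have e1 : u 1 ^ 2 * u (k + 1) ^ 2 ≤ u 1 ^ 2 * (u k * u (k + 2)) :=
        mul_le_mul_of_nonneg_left (hlc k) (sq_nonneg _)
      have e2 : (u 1 * u k) * (u 1 * u (k + 2)) ≤ (u 0 * u (k + 1)) * (u 1 * u (k + 2)) :=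
        mul_le_mul_of_nonneg_right ih (mul_nonneg (hu 1) (hu (k + 2)))
      refine aux_ratio_step (mul_nonneg (hu 1) (hu (k + 1)))
        (mul_nonneg (hu 0) (hu (k + 2))) ?_
      calc (u 1 * u (k + 1)) ^ 2 = u 1 ^ 2 * u (k + 1) ^ 2 := by ring
        _ ≤ u 1 ^ 2 * (u k * u (k + 2)) := e1
        _ = (u 1 * u k) * (u 1 * u (k + 2)) := by ring
        _ ≤ (u 0 * u (k + 1)) * (u 1 * u (k + 2)) := e2
        _ = (u 0 * u (k + 2)) * (u 1 * u (k + 1)) := by ring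
  have hpow : ∀ k, u 1 ^ (k + 1) ≤ u 0 ^ k * u (k + 1) := by
    intro k
    induction k with
    | zero => simpa using le_refl (u 1)
    | succ k ih =>
      calc u 1 ^ (k + 2) = u 1 ^ (k + 1) * u 1 := by ring
        _ ≤ (u 0 ^ k * u (k + 1)) * u 1 := mul_le_mul_of_nonneg_right ih (hu 1)
        _ = u 0 ^ k * (u 1 * u (k + 1)) := by ring
        _ ≤ u 0 ^ k * (u 0 * u (k + 2)) :=
            mul_le_mul_of_nonneg_left (hstep (k + 1)) (pow_nonneg (hu 0) k)
        _ = u 0 ^ (k + 1) * u (k + 2) := by ring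
  rcases (hu 0).eq_or_lt with h0 | h0
  · have h1 := hpow 1
    rw [← h0] at h1
    simp at h1
    nlinarith [hu1]
  · set ρ : ℝ := u 1 / (c * u 0) with hρ
    have hcu0 : 0 < c * u 0 := mul_pos hc h0
    have hρ1 : 1 < ρ := (one_lt_div hcu0).2 hcon
    obtain ⟨m, hm⟩ := pow_unbounded_of_one_lt (K / u 0) hρ1
    have hge : K / u 0 < ρ ^ (m + 1) :=
      lt_of_lt_of_le hm (pow_le_pow_right₀ hρ1.le (Nat.le_succ m))
    have h2 : u 1 ^ (m + 1) ≤ u 0 ^ m * (K * c ^ (m + 1)) :=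
      (hpow m).trans (mul_le_mul_of_nonneg_left (hub (m + 1)) (pow_nonneg (hu 0) m))
    have hu1eq : u 1 = ρ * (c * u 0) := by rw [hρ, div_mul_cancel₀ _ hcu0.ne']
    rw [hu1eq] at h2
    have expand : (ρ * (c * u 0)) ^ (m + 1) = (ρ ^ (m + 1) * u 0) * (u 0 ^ m * c ^ (m + 1)) := by
      ring
    rw [expand] at h2
    have h3 : ρ ^ (m + 1) * u 0 ≤ K := by
      have hpos : 0 < u 0 ^ m * c ^ (m + 1) := mul_pos (pow_pos h0 m) (pow_pos hc _)
      have h2' : (ρ ^ (m + 1) * u 0) * (u 0 ^ m * c ^ (m + 1)) ≤ K * (u 0 ^ m * c ^ (m + 1)) := by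
        calc (ρ ^ (m + 1) * u 0) * (u 0 ^ m * c ^ (m + 1)) ≤ u 0 ^ m * (K * c ^ (m + 1)) := h2
          _ = K * (u 0 ^ m * c ^ (m + 1)) := by ring
      exact le_of_mul_le_mul_right h2' hpos
    have h4 : ρ ^ (m + 1) ≤ K / u 0 := (le_div_iff₀ h0).2 h3
    linarith


/-- the ordered product `T_1 T_2 ⋯ T_j`. -/
def twistProd {W : Type*} [NormedAddCommGroup W] [InnerProductSpace ℂ W]
    (Tk : ℕ → (W →L[ℂ] W)) (j : ℕ) : W →L[ℂ] W :=
  ((List.range j).map fun i => Tk (i + 1)).prod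

/-- `R_{T,n} = 1 + T_1 + T_1T_2 + ⋯ + T_1⋯T_{n-1}`. -/
def Rop {W : Type*} [NormedAddCommGroup W] [InnerProductSpace ℂ W]
    (Tk : ℕ → (W →L[ℂ] W)) (n : ℕ) : W →L[ℂ] W :=
  ∑ j ∈ Finset.range n, twistProd Tk j

/-- `P_{T,n}`, via `P_{T,0} = P_{T,1} = 1`, `P_{T,n+1} = (1 ⊗ P_{T,n}) R_{T,n+1}`. -/
def Pop {V : ℕ → Type*} [∀ n, NormedAddCommGroup (V n)] [∀ n, InnerProductSpace ℂ (V n)]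
    (Tk : ∀ n, ℕ → (V n →L[ℂ] V n))
    (ampL : ∀ n, (V n →L[ℂ] V n) → (V (n + 1) →L[ℂ] V (n + 1))) : ∀ n, V n →L[ℂ] V n
  | 0 => 1
  | n + 1 => ampL n (Pop Tk ampL n) * Rop (Tk (n + 1)) (n + 1)

/-- Twisted creation operator bound: for a twist `T` and
`ξ ∈ H`, `‖a*_{L,T}(ξ)[Ψ]‖_T² ≤ c_{T,n} ‖ξ‖² ‖[Ψ]‖_T²`, i.e.
`⟨ξ⊗Ψ, P_{T,n+1}(ξ⊗Ψ)⟩ ≤ c_{T,n} ‖ξ‖² ⟨Ψ, P_{T,n}Ψ⟩` with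
`c_{T,n} = Σ_{k=0}^n ‖T‖^k`; in particular, if `‖T‖ < 1` then
`⟨ξ⊗Ψ, P_{T,n+1}(ξ⊗Ψ)⟩ ≤ (1-‖T‖)⁻¹ ‖ξ‖² ⟨Ψ, P_{T,n}Ψ⟩`
(the bound `‖a*_{L,T}(ξ)‖_T ≤ ‖ξ‖/√(1-‖T‖)`). -/
theorem creation_operator_bound
    {V : ℕ → Type*} [∀ n, NormedAddCommGroup (V n)] [∀ n, InnerProductSpace ℂ (V n)]
    [∀ n, CompleteSpace (V n)]
    (Tk : ∀ n, ℕ → (V n →L[ℂ] V n))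
    (ampL : ∀ n, (V n →L[ℂ] V n) → (V (n + 1) →L[ℂ] V (n + 1)))
    (tens : ∀ n, V 1 → V n → V (n + 1))
    (hTk_sa : ∀ n k, IsSelfAdjoint (Tk n k))
    (hnorm : ‖Tk 2 1‖ ≤ 1)
    (hTk_norm : ∀ n k, ‖Tk n k‖ ≤ ‖Tk 2 1‖)
    (hampL_one : ∀ n, ampL n 1 = 1)
    (hampL_mul : ∀ n (A B : V n →L[ℂ] V n), ampL n (A * B) = ampL n A * ampL n B)
    (hampL_add : ∀ n (A B : V n →L[ℂ] V n), ampL n (A + B) = ampL n A + ampL n B)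
    (hampL_star : ∀ n (A : V n →L[ℂ] V n), ampL n (adjoint A) = adjoint (ampL n A))
    (hampL_Tk : ∀ n k, ampL n (Tk n k) = Tk (n + 1) (k + 1))
    (hampL_pos : ∀ n (A : V n →L[ℂ] V n), A.IsPositive → (ampL n A).IsPositive)
    (hpos : ∀ n, (Pop Tk ampL n).IsPositive)
    (htens_inner : ∀ n (ξ ξ' : V 1) (Ψ Ψ' : V n),
      (inner ℂ (tens n ξ Ψ) (tens n ξ' Ψ') : ℂ) = inner ℂ ξ ξ' * inner ℂ Ψ Ψ')
    (htens_amp : ∀ n (A : V n →L[ℂ] V n) (ξ : V 1) (Ψ : V n),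
      ampL n A (tens n ξ Ψ) = tens n ξ (A Ψ)) :
    ∀ n (ξ : V 1) (Ψ : V n),
      ((inner ℂ (tens n ξ Ψ) (Pop Tk ampL (n + 1) (tens n ξ Ψ)) : ℂ)).re
          ≤ (∑ k ∈ Finset.range (n + 1), ‖Tk 2 1‖ ^ k) * ‖ξ‖ ^ 2
            * ((inner ℂ Ψ (Pop Tk ampL n Ψ) : ℂ)).re ∧
      (‖Tk 2 1‖ < 1 →
        ((inner ℂ (tens n ξ Ψ) (Pop Tk ampL (n + 1) (tens n ξ Ψ)) : ℂ)).re
          ≤ (1 - ‖Tk 2 1‖)⁻¹ * ‖ξ‖ ^ 2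
            * ((inner ℂ Ψ (Pop Tk ampL n Ψ) : ℂ)).re) := by
  intro n ξ Ψ
  have hTnn : (0 : ℝ) ≤ ‖Tk 2 1‖ := norm_nonneg _
  set cc : ℝ := ∑ k ∈ Finset.range (n + 1), ‖Tk 2 1‖ ^ k with hcc
  have hcc1 : (1 : ℝ) ≤ cc := by
    rw [hcc]
    calc (1 : ℝ) = ∑ k ∈ Finset.range 1, ‖Tk 2 1‖ ^ k := by simp
      _ ≤ _ := Finset.sum_le_sum_of_subset_of_nonneg
          (Finset.range_subset_range.2 (Nat.le_add_left 1 n))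
          (fun i _ _ => pow_nonneg hTnn i)
  have hccpos : (0 : ℝ) < cc := lt_of_lt_of_le one_pos hcc1
  set R := Rop (Tk (n + 1)) (n + 1) with hRdef
  have hprod : ∀ j, ‖twistProd (Tk (n + 1)) j‖ ≤ ‖Tk 2 1‖ ^ j := by
    intro j
    induction j with
    | zero =>
      simp only [twistProd, List.range_zero, List.map_nil, List.prod_nil, pow_zero]
      rw [ContinuousLinearMap.one_def]
      exact ContinuousLinearMap.norm_id_le
    | succ j ih =>
      have hsplit : twistProd (Tk (n + 1)) (j + 1)
          = twistProd (Tk (n + 1)) j * Tk (n + 1) (j + 1) := by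
        simp [twistProd, List.range_succ]
      rw [hsplit, pow_succ]
      exact le_trans (norm_mul_le _ _)
        (mul_le_mul ih (hTk_norm _ _) (norm_nonneg _) (pow_nonneg hTnn j))
  have hRnorm : ‖R‖ ≤ cc := by
    rw [hRdef, Rop, hcc]
    exact le_trans (norm_sum_le _ _) (Finset.sum_le_sum fun j _ => hprod j)
  -- square root of Pop n
  have hPn_nonneg : (0 : V n →L[ℂ] V n) ≤ Pop Tk ampL n :=
    (ContinuousLinearMap.nonneg_iff_isPositive _).2 (hpos n)
  set S := CFC.sqrt (Pop Tk ampL n) with hSdef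
  have hS_nonneg : (0 : V n →L[ℂ] V n) ≤ S := CFC.sqrt_nonneg _
  have hSsa : IsSelfAdjoint S := IsSelfAdjoint.of_nonneg hS_nonneg
  have hSS : S * S = Pop Tk ampL n := CFC.sqrt_mul_sqrt_self _ hPn_nonneg
  set Q := ampL n S with hQdef
  set A := ampL n (Pop Tk ampL n) with hAdef
  have hQQ : Q * Q = A := by rw [hQdef, hAdef, ← hSS, hampL_mul]
  have hQadj : adjoint Q = Q := by rw [hQdef, ← hampL_star, hSsa.adjoint_eq]
  have hA_pos : A.IsPositive := hampL_pos n _ (hpos n)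
  have hAadj : adjoint A = A := hA_pos.isSelfAdjoint.adjoint_eq
  have hP1 : Pop Tk ampL (n + 1) = A * R := rfl
  have hswap : adjoint R * A = A * R := by
    have h1 : adjoint (A * R) = A * R := by
      rw [← hP1]; exact (hpos (n + 1)).isSelfAdjoint.adjoint_eq
    calc adjoint R * A = adjoint R * adjoint A := by rw [hAadj]
      _ = adjoint (A * R) := by
          rw [← ContinuousLinearMap.star_eq_adjoint, ← ContinuousLinearMap.star_eq_adjoint,
            ← ContinuousLinearMap.star_eq_adjoint, star_mul]
      _ = A * R := h1
  set Φ := tens n ξ Ψ with hΦdef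
  set v : ℕ → V (n + 1) := fun k => (R ^ k) Φ with hvdef
  have hv0 : v 0 = Φ := by simp [hvdef]
  have hvs : ∀ k, v (k + 1) = R (v k) := by
    intro k
    simp only [hvdef, pow_succ']
    rw [ContinuousLinearMap.mul_apply]
  have hQin : ∀ a b : V (n + 1), (inner ℂ (Q a) (Q b) : ℂ) = inner ℂ a (A b) := by
    intro a b
    calc (inner ℂ (Q a) (Q b) : ℂ) = inner ℂ (adjoint Q a) (Q b) := by rw [hQadj]
      _ = inner ℂ a (Q (Q b)) := ContinuousLinearMap.adjoint_inner_left Q (Q b) a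
      _ = inner ℂ a (A b) := by rw [← ContinuousLinearMap.mul_apply, hQQ]
  set u : ℕ → ℝ := fun k => ‖Q (v k)‖ with hudef
  have hu_nonneg : ∀ k, 0 ≤ u k := fun k => norm_nonneg _
  have hre_bound : ∀ a b : V (n + 1), ((inner ℂ (Q a) (Q b) : ℂ)).re ≤ ‖Q a‖ * ‖Q b‖ := by
    intro a b
    exact le_trans (Complex.re_le_norm _)
      (le_trans le_rfl (norm_inner_le_norm _ _))
  have hself : ∀ x : V (n + 1), ((inner ℂ x x : ℂ)).re = ‖x‖ ^ 2 := by
    intro x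
    simpa using inner_self_eq_norm_sq (𝕜 := ℂ) x
  have hmove : ∀ k, (inner ℂ (v (k + 1)) (A (v (k + 1))) : ℂ) = inner ℂ (v k) (A (v (k + 2))) := by
    intro k
    calc (inner ℂ (v (k + 1)) (A (v (k + 1))) : ℂ)
        = inner ℂ (R (v k)) (A (v (k + 1))) := by rw [hvs k]
      _ = inner ℂ (v k) (adjoint R (A (v (k + 1)))) :=
          (ContinuousLinearMap.adjoint_inner_right R (v k) (A (v (k + 1)))).symm
      _ = inner ℂ (v k) ((adjoint R * A) (v (k + 1))) := by
          rw [ContinuousLinearMap.mul_apply]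
      _ = inner ℂ (v k) ((A * R) (v (k + 1))) := by rw [hswap]
      _ = inner ℂ (v k) (A (R (v (k + 1)))) := by rw [ContinuousLinearMap.mul_apply]
      _ = inner ℂ (v k) (A (v (k + 2))) := by rw [← hvs (k + 1)]
  have hlc : ∀ k, u (k + 1) ^ 2 ≤ u k * u (k + 2) := by
    intro k
    have e1 : u (k + 1) ^ 2 = ((inner ℂ (Q (v k)) (Q (v (k + 2))) : ℂ)).re := by
      have : u (k + 1) ^ 2 = ((inner ℂ (Q (v (k + 1))) (Q (v (k + 1))) : ℂ)).re := by
        rw [hself]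
      rw [this, hQin, hmove k, ← hQin]
    rw [e1]
    exact hre_bound _ _
  have hvnorm : ∀ k, ‖v k‖ ≤ ‖Φ‖ * cc ^ k := by
    intro k
    induction k with
    | zero => simp [hv0]
    | succ k ih =>
      rw [hvs k, pow_succ]
      calc ‖R (v k)‖ ≤ ‖R‖ * ‖v k‖ := R.le_opNorm (v k)
        _ ≤ cc * (‖Φ‖ * cc ^ k) := mul_le_mul hRnorm ih (norm_nonneg _) hccpos.le
        _ = ‖Φ‖ * (cc ^ k * cc) := by ring
  have hub : ∀ k, u k ≤ (‖Q‖ * ‖Φ‖) * cc ^ k := by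
    intro k
    calc u k ≤ ‖Q‖ * ‖v k‖ := Q.le_opNorm (v k)
      _ ≤ ‖Q‖ * (‖Φ‖ * cc ^ k) := mul_le_mul_of_nonneg_left (hvnorm k) (norm_nonneg _)
      _ = (‖Q‖ * ‖Φ‖) * cc ^ k := by ring
  have key : u 1 ≤ cc * u 0 := logconvex_bound u hu_nonneg hlc hccpos hub
  have hmain : ((inner ℂ Φ (Pop Tk ampL (n + 1) Φ) : ℂ)).re ≤ cc * (u 0 * u 0) := by
    have h1 : (inner ℂ Φ (Pop Tk ampL (n + 1) Φ) : ℂ) = inner ℂ (Q (v 0)) (Q (v 1)) := by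
      rw [hP1]
      calc (inner ℂ Φ ((A * R) Φ) : ℂ) = inner ℂ (v 0) (A (R (v 0))) := by
            rw [hv0, ContinuousLinearMap.mul_apply]
        _ = inner ℂ (v 0) (A (v 1)) := by rw [← hvs 0]
        _ = inner ℂ (Q (v 0)) (Q (v 1)) := (hQin _ _).symm
    rw [h1]
    calc ((inner ℂ (Q (v 0)) (Q (v 1)) : ℂ)).re ≤ u 0 * u 1 := hre_bound _ _
      _ ≤ u 0 * (cc * u 0) := mul_le_mul_of_nonneg_left key (hu_nonneg 0)
      _ = cc * (u 0 * u 0) := by ring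
  have hQΦ : Q Φ = tens n ξ (S Ψ) := htens_amp n S ξ Ψ
  have hSinner : (inner ℂ (S Ψ) (S Ψ) : ℂ) = inner ℂ Ψ (Pop Tk ampL n Ψ) := by
    calc (inner ℂ (S Ψ) (S Ψ) : ℂ) = inner ℂ (adjoint S Ψ) (S Ψ) := by rw [hSsa.adjoint_eq]
      _ = inner ℂ Ψ (S (S Ψ)) := ContinuousLinearMap.adjoint_inner_left S (S Ψ) Ψ
      _ = inner ℂ Ψ (Pop Tk ampL n Ψ) := by rw [← ContinuousLinearMap.mul_apply, hSS]
  have hu0sq : u 0 * u 0 = ‖ξ‖ ^ 2 * ((inner ℂ Ψ (Pop Tk ampL n Ψ) : ℂ)).re := by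
    have e0 : u 0 * u 0 = ((inner ℂ (Q (v 0)) (Q (v 0)) : ℂ)).re := by
      rw [hself]; ring
    have hξre : ((inner ℂ ξ ξ : ℂ)).re = ‖ξ‖ ^ 2 := by
      simpa using inner_self_eq_norm_sq (𝕜 := ℂ) ξ
    have hξim : ((inner ℂ ξ ξ : ℂ)).im = 0 := by
      rw [← RCLike.im_to_complex]; exact inner_self_im ξ
    rw [e0, hv0, hQΦ, htens_inner, hSinner, Complex.mul_re, hξre, hξim]
    ring
  have part1 : ((inner ℂ Φ (Pop Tk ampL (n + 1) Φ) : ℂ)).re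
      ≤ cc * ‖ξ‖ ^ 2 * ((inner ℂ Ψ (Pop Tk ampL n Ψ) : ℂ)).re := by
    calc ((inner ℂ Φ (Pop Tk ampL (n + 1) Φ) : ℂ)).re ≤ cc * (u 0 * u 0) := hmain
      _ = cc * ‖ξ‖ ^ 2 * ((inner ℂ Ψ (Pop Tk ampL n Ψ) : ℂ)).re := by
          rw [hu0sq]; ring
  refine ⟨part1, fun hlt => ?_⟩
  have hinner_nonneg : 0 ≤ ((inner ℂ Ψ (Pop Tk ampL n Ψ) : ℂ)).re := by
    have h := (hpos n).inner_nonneg_right Ψ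
    exact (Complex.nonneg_iff.mp (by simpa using h : (0:ℂ) ≤ inner ℂ Ψ (Pop Tk ampL n Ψ))).1
  have h1m : (0 : ℝ) < 1 - ‖Tk 2 1‖ := by linarith
  have hgeom : cc ≤ (1 - ‖Tk 2 1‖)⁻¹ := by
    have hgm := geom_sum_mul (‖Tk 2 1‖) (n + 1)
    rw [← hcc] at hgm
    have h2 : cc * (1 - ‖Tk 2 1‖) ≤ 1 := by
      have hpow := pow_nonneg hTnn (n + 1)
      nlinarith [hgm]
    rw [← one_div]
    exact (le_div_iff₀ h1m).2 h2
  calc ((inner ℂ Φ (Pop Tk ampL (n + 1) Φ) : ℂ)).re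
      ≤ cc * ‖ξ‖ ^ 2 * ((inner ℂ Ψ (Pop Tk ampL n Ψ) : ℂ)).re := part1
    _ ≤ (1 - ‖Tk 2 1‖)⁻¹ * ‖ξ‖ ^ 2 * ((inner ℂ Ψ (Pop Tk ampL n Ψ) : ℂ)).re := by
        apply mul_le_mul_of_nonneg_right _ hinner_nonneg
        exact mul_le_mul_of_nonneg_right hgeom (sq_nonneg _)
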